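/- For a precise one-bounded expectation X, separating multiplication with X distributes over pointwise minimum: X ⋆ min(Y, Z) = min(X ⋆ Y, X ⋆ Z). -/

import Mathlib

open ENNReal

abbrev Heap := ℤ → Option ℤ
abbrev Stack := String → ℤ
abbrev PState := Stack × Heap
abbrev Exp := PState → ℝ≥0∞

/-- Heaps are disjoint if their domains are disjoint. -/
def HDisj (h₁ h₂ : Heap) : Prop := ∀ l, h₁ l = none ∨ h₂ l = none

/-- Disjoint union of heaps. -/
def HJoin (h₁ h₂ : Heap) : Heap := fun l => (h₁ l).orElse (fun _ => h₂ l)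

/-- Separating multiplication: (X ⋆ Y)(s,h) = sup { X(s,h₁)·Y(s,h₂) | h₁ ⋆ h₂ = h }. -/
noncomputable def sepMul (X Y : Exp) : Exp := fun σ =>
  ⨆ h₁, ⨆ h₂, ⨆ (_ : HDisj h₁ h₂ ∧ HJoin h₁ h₂ = σ.2), X (σ.1, h₁) * Y (σ.1, h₂)

/-- One-bounded expectations take values in [0,1]. -/
def OneBounded (X : Exp) : Prop := ∀ σ, X σ ≤ 1

/-- Qualitative expectations take values in {0,1}. -/
def Qualitative (φ : Exp) : Prop := ∀ σ, φ σ = 0 ∨ φ σ = 1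

/-- Guarded magic wand: (φ -⋆ X)(s,h) = inf { X(s, h ⋆ h') | φ(s,h') = 1, h' ⊥ h },
with the infimum of the empty set being 1 (for one-bounded X). -/
noncomputable def wand (φ X : Exp) : Exp := fun σ =>
  (⨅ h' : {h' : Heap // φ (σ.1, h') = 1 ∧ HDisj σ.2 h'}, X (σ.1, HJoin σ.2 h'.1)) ⊓ 1

/-- An expectation is precise if for every state at most one subheap of the heap
gives it a nonzero value. -/
def Precise (X : Exp) : Prop := ∀ (s : Stack) (h : Heap),
  Set.Subsingleton
    {h1 : Heap | (∃ h2, HDisj h1 h2 ∧ HJoin h1 h2 = h) ∧ 0 < X (s, h1)}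

lemma hjoin_cancel {h1 h2 h2' : Heap} (d : HDisj h1 h2) (d' : HDisj h1 h2')
    (e : HJoin h1 h2 = HJoin h1 h2') : h2 = h2' := by
  funext l
  have el := congrFun e l
  cases hl : h1 l with
  | none => simpa [HJoin, hl] using el
  | some v =>
    rcases d l with h | h
    · simp [hl] at h
    rcases d' l with h' | h'
    · simp [hl] at h'
    rw [h, h']

theorem precise_sepMul_min (X Y Z : Exp)
    (hX : OneBounded X) (hY : OneBounded Y) (hZ : OneBounded Z)
    (hprec : Precise X) :
    sepMul X (fun σ => min (Y σ) (Z σ)) =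
      fun σ => min (sepMul X Y σ) (sepMul X Z σ) := by
  funext σ
  obtain ⟨s, h⟩ := σ
  apply le_antisymm
  · refine le_min ?_ ?_ <;>
      exact iSup_mono fun h1 => iSup_mono fun h2 => iSup_mono fun _ =>
        mul_le_mul_right (by first | exact min_le_left _ _ | exact min_le_right _ _) _
  · by_cases hex : ∃ h1 h2, (HDisj h1 h2 ∧ HJoin h1 h2 = h) ∧ 0 < X (s, h1)
    · obtain ⟨h1, h2, ⟨hd, hj⟩, hpos⟩ := hex
      have key : ∀ (W : Exp), sepMul X W (s, h) = X (s, h1) * W (s, h2) := by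
        intro W
        apply le_antisymm
        · refine iSup_le fun h1' => iSup_le fun h2' => iSup_le fun hc => ?_
          obtain ⟨hd', hj'⟩ := hc
          rcases eq_or_lt_of_le ((zero_le : (0 : ℝ≥0∞) ≤ X (s, h1'))) with hz | hpos'
          · rw [← hz, zero_mul]; exact zero_le
          · have e1 : h1' = h1 :=
              hprec s h ⟨⟨h2', hd', hj'⟩, hpos'⟩ ⟨⟨h2, hd, hj⟩, hpos⟩
            subst e1
            have e2 : h2' = h2 := hjoin_cancel hd' hd (hj'.trans hj.symm)
            subst e2; exact le_rfl
        · exact le_iSup_of_le h1 (le_iSup_of_le h2 (le_iSup_of_le ⟨hd, hj⟩ le_rfl))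
      rw [key Y, key Z, key (fun σ => min (Y σ) (Z σ))]
      rcases le_total (Y (s, h2)) (Z (s, h2)) with hle | hle
      · simp only [min_eq_left hle, min_eq_left (mul_le_mul_right hle (X (s, h1)))]
        exact le_rfl
      · simp only [min_eq_right hle, min_eq_right (mul_le_mul_right hle (X (s, h1)))]
        exact le_rfl
    · push_neg at hex
      have hzero : sepMul X Y (s, h) = 0 := by
        refine le_antisymm (iSup_le fun h1 => iSup_le fun h2 => iSup_le fun hc => ?_)
          (zero_le)
        have : X (s, h1) = 0 := le_antisymm (hex h1 h2 hc) (zero_le)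
        simp [this]
      exact min_le_of_left_le (le_of_eq hzero) |>.trans (zero_le)
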